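/- Meyers' Theorem 3: Let a < b and let f : ℝ → ℝ be differentiable at every point of the closed interval [a, b] with derivative f' continuous on [a, b]. If (f(b) - f(a)) * (f(b) - f(a) - (b - a) * f'(b)) < 0, then there exists ξ ∈ (a, b) such that f'(ξ) = (f(b) - f(a)) / (ξ - a). -/
import Mathlib

/-- Meyers' Theorem 3. -/
theorem meyers_theorem_3 (f f' : ℝ → ℝ) (a b : ℝ) (hab : a < b)
    (hf : ∀ x ∈ Set.Icc a b, HasDerivWithinAt f (f' x) (Set.Icc a b) x)
    (hf' : ContinuousOn f' (Set.Icc a b))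
    (hcond : (f b - f a) * (f b - f a - (b - a) * f' b) < 0) :
    ∃ ξ ∈ Set.Ioo a b, f' ξ = (f b - f a) / (ξ - a) := by
  set g : ℝ → ℝ := fun x => f' x * (x - a) - (f b - f a) with hg
  have hgc : ContinuousOn g (Set.Icc a b) :=
    (hf'.mul ((continuous_id.sub continuous_const).continuousOn)).sub continuousOn_const
  have hga : g a = -(f b - f a) := by simp [hg]
  have hprod : g a * g b < 0 := by
    have : g a * g b = (f b - f a) * (f b - f a - (b - a) * f' b) := by
      simp only [hg, hga]; ring
    linarith [this ▸ hcond]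
  have key : ∃ ξ ∈ Set.Ioo a b, g ξ = 0 := by
    rcases lt_or_ge (g a) 0 with h1 | h1
    · have h2 : 0 < g b := by nlinarith
      have := intermediate_value_Ioo hab.le hgc
      have h0 : (0:ℝ) ∈ Set.Ioo (g a) (g b) := ⟨h1, h2⟩
      obtain ⟨ξ, hξ, hξ0⟩ := this h0
      exact ⟨ξ, hξ, hξ0⟩
    · have h1' : 0 < g a := by
        rcases h1.lt_or_eq with h | h
        · exact h
        · exfalso; rw [← h] at hprod; simp at hprod
      have h2 : g b < 0 := by nlinarith
      have := intermediate_value_Ioo' hab.le hgc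
      have h0 : (0:ℝ) ∈ Set.Ioo (g b) (g a) := ⟨h2, h1'⟩
      obtain ⟨ξ, hξ, hξ0⟩ := this h0
      exact ⟨ξ, hξ, hξ0⟩
  obtain ⟨ξ, hξ, hξ0⟩ := key
  refine ⟨ξ, hξ, ?_⟩
  have hne : ξ - a ≠ 0 := sub_ne_zero.2 (ne_of_gt hξ.1)
  have : f' ξ * (ξ - a) = f b - f a := by simpa [hg, sub_eq_zero] using hξ0
  field_simp
  linarith [this]
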